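/- Let K be an even hyperbolic lattice of signature (1, n−1), (c_i) integral vectors in the closure of the positive cone with Σ a_i c_i = 0 (a_i nonzero integers), and p⁺(λ) := Σ a_i|λ·c_i|. Then the series Θ⁺(τ) = Σ_{λ∈K^∨} p⁺(λ) e^{−2πiτQ(λ)} (valued in ℂ[K^∨/K]) converges absolutely and uniformly on compact subsets of the upper half-plane, hence defines a holomorphic function on ℍ. -/

import Mathlib

open Real

/-- An even symmetric bilinear form of signature `(1, n+1)` on `ℝ^{n+2}`. -/
def bh (n : ℕ) (x y : Fin (n+2) → ℝ) : ℝ :=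
  x 0 * y 1 + x 1 * y 0 - 2 * ∑ i ∈ Finset.Ioi (1 : Fin (n+2)), x i * y i

/-- The quadratic form `Q(x) = (1/2) x·x`. -/
noncomputable def qh (n : ℕ) (x : Fin (n+2) → ℝ) : ℝ := bh n x x / 2

/-- Lattice vectors: vectors with integer coordinates. -/
def intVec (n : ℕ) (x : Fin (n+2) → ℝ) : Prop := ∀ i, ∃ m : ℤ, x i = (m : ℝ)

/-- Vectors of the dual lattice `K^∨`. -/
def dualVec (n : ℕ) (x : Fin (n+2) → ℝ) : Prop :=
  ∀ y, intVec n y → ∃ m : ℤ, bh n x y = (m : ℝ)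

namespace ThetaAux

variable {n : ℕ}

lemma fin_cases' (k : Fin (n+2)) : k = 0 ∨ k = 1 ∨ (1 : Fin (n+2)) < k := by
  have h0 : ((0 : Fin (n+2)) : ℕ) = 0 := rfl
  have h1 : ((1 : Fin (n+2)) : ℕ) = 1 := rfl
  rcases Nat.lt_or_ge (k : ℕ) 1 with h | h
  · left; rw [Fin.ext_iff, h0]; omega
  · rcases Nat.eq_or_lt_of_le h with h | h
    · right; left; rw [Fin.ext_iff, h1]; omega
    · right; right; rw [Fin.lt_def, h1]; omega

lemma univ_eq (n : ℕ) : (Finset.univ : Finset (Fin (n+2))) =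
    insert 0 (insert 1 (Finset.Ioi (1 : Fin (n+2)))) := by
  ext k
  simp only [Finset.mem_univ, true_iff, Finset.mem_insert, Finset.mem_Ioi]
  exact fin_cases' k

lemma zero_ne_one' : (0 : Fin (n+2)) ≠ 1 := by
  rw [Ne, Fin.ext_iff]; simp

lemma not_lt_zero' : ¬ (1 : Fin (n+2)) < 0 := by
  rw [Fin.lt_def]; simp

lemma sum_split (f : Fin (n+2) → ℝ) :
    ∑ k, f k = f 0 + f 1 + ∑ k ∈ Finset.Ioi (1 : Fin (n+2)), f k := by
  rw [univ_eq n]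
  rw [Finset.sum_insert (by simp [Finset.mem_Ioi, zero_ne_one', not_lt_zero']),
    Finset.sum_insert (by simp [Finset.mem_Ioi])]
  ring

noncomputable def uu (n : ℕ) (x : Fin (n+2) → ℝ) : ℝ := x 0 + x 1

noncomputable def dd (n : ℕ) (x y : Fin (n+2) → ℝ) : ℝ :=
  (x 0 - x 1) * (y 0 - y 1) / 2 + 2 * ∑ i ∈ Finset.Ioi (1 : Fin (n+2)), x i * y i

lemma bh_eq (x y : Fin (n+2) → ℝ) : bh n x y = uu n x * uu n y / 2 - dd n x y := by
  simp only [bh, uu, dd]; ring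

lemma dd_comm (x y : Fin (n+2) → ℝ) : dd n x y = dd n y x := by
  simp only [dd]
  rw [Finset.sum_congr rfl (fun i _ => mul_comm (x i) (y i))]
  ring

lemma bh_comm (x y : Fin (n+2) → ℝ) : bh n x y = bh n y x := by
  simp only [bh]
  rw [Finset.sum_congr rfl (fun i _ => mul_comm (x i) (y i))]
  ring

lemma bh_right_linear (x y z : Fin (n+2) → ℝ) (s t : ℝ) :
    bh n x (s • y + t • z) = s * bh n x y + t * bh n x z := by
  simp only [bh, Pi.add_apply, Pi.smul_apply, smul_eq_mul]
  rw [show ∑ i ∈ Finset.Ioi (1 : Fin (n+2)), x i * (s * y i + t * z i)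
      = s * (∑ i ∈ Finset.Ioi (1 : Fin (n+2)), x i * y i)
        + t * (∑ i ∈ Finset.Ioi (1 : Fin (n+2)), x i * z i) by
    rw [Finset.mul_sum, Finset.mul_sum, ← Finset.sum_add_distrib]
    exact Finset.sum_congr rfl fun i _ => by ring]
  ring

lemma bh_smul_right (x y : Fin (n+2) → ℝ) (s : ℝ) :
    bh n x (s • y) = s * bh n x y := by
  have := bh_right_linear (n := n) x y y s 0
  simpa using this

lemma bh_add_right (x y z : Fin (n+2) → ℝ) :
    bh n x (y + z) = bh n x y + bh n x z := by
  have := bh_right_linear (n := n) x y z 1 1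
  simpa using this

lemma bh_zero_right (x : Fin (n+2) → ℝ) : bh n x 0 = 0 := by
  simp [bh]

lemma bh_sum_right {ι : Type*} (S : Finset ι) (x : Fin (n+2) → ℝ)
    (f : ι → ℝ) (c : ι → (Fin (n+2) → ℝ)) :
    bh n x (∑ i ∈ S, f i • c i) = ∑ i ∈ S, f i * bh n x (c i) := by
  induction S using Finset.cons_induction with
  | empty => simp [bh_zero_right]
  | cons a s ha ih =>
      rw [Finset.sum_cons, Finset.sum_cons, bh_add_right, bh_smul_right, ih]

lemma dd_self_nonneg (x : Fin (n+2) → ℝ) : 0 ≤ dd n x x := by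
  simp only [dd]
  have h1 : 0 ≤ (x 0 - x 1) * (x 0 - x 1) := mul_self_nonneg _
  have h2 : 0 ≤ ∑ i ∈ Finset.Ioi (1 : Fin (n+2)), x i * x i :=
    Finset.sum_nonneg fun i _ => mul_self_nonneg _
  linarith

lemma dd_expand (x y : Fin (n+2) → ℝ) (s t : ℝ) :
    dd n (s • x + t • y) (s • x + t • y)
      = s^2 * dd n x x + 2*s*t * dd n x y + t^2 * dd n y y := by
  simp only [dd, Pi.add_apply, Pi.smul_apply, smul_eq_mul]
  rw [show ∑ i ∈ Finset.Ioi (1 : Fin (n+2)), (s * x i + t * y i) * (s * x i + t * y i)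
      = s^2 * (∑ i ∈ Finset.Ioi (1 : Fin (n+2)), x i * x i)
        + 2*s*t * (∑ i ∈ Finset.Ioi (1 : Fin (n+2)), x i * y i)
        + t^2 * (∑ i ∈ Finset.Ioi (1 : Fin (n+2)), y i * y i) by
    rw [Finset.mul_sum, Finset.mul_sum, Finset.mul_sum, ← Finset.sum_add_distrib,
      ← Finset.sum_add_distrib]
    exact Finset.sum_congr rfl fun i _ => by ring]
  ring

lemma dd_sq_le (x y : Fin (n+2) → ℝ) : dd n x y ^ 2 ≤ dd n x x * dd n y y := by
  have h : ∀ t : ℝ, 0 ≤ dd n y y * (t * t) + (2 * dd n x y) * t + dd n x x := by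
    intro t
    have h1 := dd_self_nonneg (n := n) (t • y + (1:ℝ) • x)
    have h2 := dd_expand (n := n) y x t 1
    have hc := dd_comm (n := n) y x
    have h3 : (0:ℝ) ≤ t^2 * dd n y y + 2*t*1 * dd n y x + 1^2 * dd n x x :=
      le_of_le_of_eq h1 h2
    rw [hc] at h3
    ring_nf at h3 ⊢
    linarith
  have := discrim_le_zero h
  rw [discrim] at this
  nlinarith [this]

lemma uu_linear (x y : Fin (n+2) → ℝ) (s t : ℝ) :
    uu n (s • x + t • y) = s * uu n x + t * uu n y := by
  simp only [uu, Pi.add_apply, Pi.smul_apply, smul_eq_mul]; ring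

lemma eq_zero_of_dd_uu (x : Fin (n+2) → ℝ) (hd : dd n x x = 0) (hu : uu n x = 0) :
    x = 0 := by
  simp only [dd] at hd
  have h1 : 0 ≤ (x 0 - x 1) * (x 0 - x 1) := mul_self_nonneg _
  have h2 : 0 ≤ ∑ i ∈ Finset.Ioi (1 : Fin (n+2)), x i * x i :=
    Finset.sum_nonneg fun i _ => mul_self_nonneg _
  have hs : (x 0 - x 1) * (x 0 - x 1) = 0 ∧
      (∑ i ∈ Finset.Ioi (1 : Fin (n+2)), x i * x i) = 0 := by constructor <;> nlinarith
  have hd01 : x 0 = x 1 := by nlinarith [hs.1]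
  have hIoi : ∀ i ∈ Finset.Ioi (1 : Fin (n+2)), x i * x i = 0 :=
    (Finset.sum_eq_zero_iff_of_nonneg (fun i _ => mul_self_nonneg _)).1 hs.2
  simp only [uu] at hu
  funext k
  rcases fin_cases' k with hk | hk | hk
  · subst hk; simp; linarith
  · subst hk; simp; linarith
  · have := hIoi k (Finset.mem_Ioi.2 hk)
    have : x k = 0 := by nlinarith [this]
    simpa using this

lemma bh_self_continuous (n : ℕ) : Continuous (fun x : Fin (n+2) → ℝ => bh n x x) := by
  unfold bh
  exact (((continuous_apply 0).mul (continuous_apply 1)).add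
      ((continuous_apply 1).mul (continuous_apply 0))).sub
    (continuous_const.mul (continuous_finset_sum _ fun i _ =>
      (continuous_apply i).mul (continuous_apply i)))

lemma cone_facts {x : Fin (n+2) → ℝ}
    (hx : x ∈ closure {x : Fin (n+2) → ℝ | 0 < bh n x x ∧ 0 < x 0 + x 1}) :
    0 ≤ bh n x x ∧ 0 ≤ uu n x := by
  have hclosed : IsClosed {x : Fin (n+2) → ℝ | 0 ≤ bh n x x ∧ 0 ≤ x 0 + x 1} := by
    apply IsClosed.inter
    · exact isClosed_le continuous_const (bh_self_continuous n)
    · exact isClosed_le continuous_const ((continuous_apply 0).add (continuous_apply 1))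
  have hsub : {x : Fin (n+2) → ℝ | 0 < bh n x x ∧ 0 < x 0 + x 1} ⊆
      {x : Fin (n+2) → ℝ | 0 ≤ bh n x x ∧ 0 ≤ x 0 + x 1} :=
    fun z hz => ⟨le_of_lt hz.1, le_of_lt hz.2⟩
  have := closure_minimal hsub hclosed hx
  exact ⟨this.1, this.2⟩

/-- reverse Cauchy-Schwarz for forward vectors -/
lemma bh_nonneg_of_cone {x y : Fin (n+2) → ℝ}
    (hx : 0 ≤ bh n x x ∧ 0 ≤ uu n x) (hy : 0 ≤ bh n y y ∧ 0 ≤ uu n y) :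
    0 ≤ bh n x y := by
  have hcs := dd_sq_le (n := n) x y
  have hex : 2 * dd n x x ≤ uu n x ^ 2 := by
    have := hx.1; rw [bh_eq] at this; nlinarith
  have hey : 2 * dd n y y ≤ uu n y ^ 2 := by
    have := hy.1; rw [bh_eq] at this; nlinarith
  have hdx := dd_self_nonneg (n := n) x
  have hdy := dd_self_nonneg (n := n) y
  rw [bh_eq]
  nlinarith [hx.2, hy.2, sq_nonneg (uu n x * uu n y - 2 * dd n x y),
    sq_nonneg (uu n x * uu n y + 2 * dd n x y), mul_nonneg hx.2 hy.2]

lemma eq_zero_of_cone_uu {x : Fin (n+2) → ℝ}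
    (hx : 0 ≤ bh n x x ∧ 0 ≤ uu n x) (hu : uu n x = 0) : x = 0 := by
  apply eq_zero_of_dd_uu (n := n) x _ hu
  have := hx.1; rw [bh_eq, hu] at this
  have := dd_self_nonneg (n := n) x
  linarith

/-- strict positivity of products for separated forward vectors -/
lemma bh_pos_of_sep {x y lam : Fin (n+2) → ℝ}
    (hx : 0 ≤ bh n x x ∧ 0 ≤ uu n x) (hy : 0 ≤ bh n y y ∧ 0 ≤ uu n y)
    (hA : 0 < bh n lam x) (hB : bh n lam y < 0) : 0 < bh n x y := by
  rcases lt_or_eq_of_le (bh_nonneg_of_cone hx hy) with h | h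
  · exact h
  exfalso
  -- bh x y = 0
  have hxy : bh n x y = 0 := h.symm
  have hux : 0 < uu n x := by
    rcases lt_or_eq_of_le hx.2 with h' | h'
    · exact h'
    · exfalso
      have hx0 : x = 0 := eq_zero_of_cone_uu hx h'.symm
      rw [hx0, bh_zero_right] at hA; exact lt_irrefl 0 hA
  have huy : 0 < uu n y := by
    rcases lt_or_eq_of_le hy.2 with h' | h'
    · exact h'
    · exfalso
      have hy0 : y = 0 := eq_zero_of_cone_uu hy h'.symm
      rw [hy0, bh_zero_right] at hB; exact lt_irrefl 0 hB
  have hdxy : dd n x y = uu n x * uu n y / 2 := by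
    rw [bh_eq] at hxy; linarith
  have hex : 2 * dd n x x ≤ uu n x ^ 2 := by
    have := hx.1; rw [bh_eq] at this; nlinarith
  have hey : 2 * dd n y y ≤ uu n y ^ 2 := by
    have := hy.1; rw [bh_eq] at this; nlinarith
  set w : Fin (n+2) → ℝ := uu n y • x + (-(uu n x)) • y with hw
  have hdw : dd n w w = 0 := by
    have hexp := dd_expand (n := n) x y (uu n y) (-(uu n x))
    rw [← hw] at hexp
    have hnn := dd_self_nonneg (n := n) w
    have k3 : 2 * uu n y * (-(uu n x)) * dd n x y = -(uu n x^2 * uu n y^2) := by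
      rw [hdxy]; ring
    nlinarith [hexp, hnn, k3, mul_le_mul_of_nonneg_left hex (sq_nonneg (uu n y)),
      mul_le_mul_of_nonneg_left hey (sq_nonneg (uu n x))]
  have huw : uu n w = 0 := by
    rw [hw, uu_linear]; ring
  have hw0 : w = 0 := eq_zero_of_dd_uu (n := n) w hdw huw
  have hlin : bh n lam w = uu n y * bh n lam x + (-(uu n x)) * bh n lam y :=
    bh_right_linear lam x y _ _
  rw [hw0, bh_zero_right] at hlin
  nlinarith [mul_pos huy hA, mul_pos hux (neg_pos.2 hB)]

/-- coordinatewise bound for bh -/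
lemma abs_bh_le (x y : Fin (n+2) → ℝ) :
    |bh n x y| ≤ (2 * ∑ k, |y k|) * ∑ k, |x k| := by
  set K := 2 * ∑ k, |y k| with hK
  have hsumy : ∀ k, |y k| ≤ ∑ k, |y k| := fun k =>
    Finset.single_le_sum (f := fun k => |y k|) (fun i _ => abs_nonneg _) (Finset.mem_univ k)
  have hsumynn : 0 ≤ ∑ k, |y k| := Finset.sum_nonneg fun i _ => abs_nonneg _
  have hKy : ∀ k, |y k| ≤ K := fun k => by
    have := hsumy k; rw [hK]; linarith
  have h2Ky : ∀ k, 2 * |y k| ≤ K := fun k => by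
    have := hsumy k; rw [hK]; linarith
  have hK0 : 0 ≤ K := by rw [hK]; linarith
  have step1 : |bh n x y| ≤ |x 0| * |y 1| + |x 1| * |y 0|
      + 2 * ∑ i ∈ Finset.Ioi (1 : Fin (n+2)), |x i| * |y i| := by
    unfold bh
    have habs : |∑ i ∈ Finset.Ioi (1 : Fin (n+2)), x i * y i|
        ≤ ∑ i ∈ Finset.Ioi (1 : Fin (n+2)), |x i| * |y i| := by
      refine le_trans (Finset.abs_sum_le_sum_abs _ _) ?_
      exact Finset.sum_le_sum fun i _ => by rw [abs_mul]
    calc |x 0 * y 1 + x 1 * y 0 - 2 * ∑ i ∈ Finset.Ioi (1 : Fin (n+2)), x i * y i|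
        ≤ |x 0 * y 1 + x 1 * y 0| + |2 * ∑ i ∈ Finset.Ioi (1 : Fin (n+2)), x i * y i| :=
          abs_sub _ _
      _ ≤ |x 0| * |y 1| + |x 1| * |y 0|
          + 2 * ∑ i ∈ Finset.Ioi (1 : Fin (n+2)), |x i| * |y i| := by
          have h1 := abs_add_le (x 0 * y 1) (x 1 * y 0)
          rw [abs_mul, abs_mul] at h1
          rw [abs_mul]
          have h2 : |(2:ℝ)| = 2 := by norm_num
          rw [h2]
          linarith [h1, habs]
  have step2 : |x 0| * |y 1| + |x 1| * |y 0|
      + 2 * ∑ i ∈ Finset.Ioi (1 : Fin (n+2)), |x i| * |y i| ≤ K * ∑ k, |x k| := by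
    rw [sum_split (fun k => |x k|), mul_add, mul_add]
    have t1 : |x 0| * |y 1| ≤ K * |x 0| := by
      rw [mul_comm (K) (|x 0|)]
      exact mul_le_mul_of_nonneg_left (hKy 1) (abs_nonneg _)
    have t2 : |x 1| * |y 0| ≤ K * |x 1| := by
      rw [mul_comm (K) (|x 1|)]
      exact mul_le_mul_of_nonneg_left (hKy 0) (abs_nonneg _)
    have t3 : 2 * ∑ i ∈ Finset.Ioi (1 : Fin (n+2)), |x i| * |y i|
        ≤ K * ∑ i ∈ Finset.Ioi (1 : Fin (n+2)), |x i| := by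
      rw [Finset.mul_sum, Finset.mul_sum]
      refine Finset.sum_le_sum fun i _ => ?_
      calc 2 * (|x i| * |y i|) = (2 * |y i|) * |x i| := by ring
        _ ≤ K * |x i| := mul_le_mul_of_nonneg_right (h2Ky i) (abs_nonneg _)
    linarith
  linarith

lemma bh_expand (x y : Fin (n+2) → ℝ) (s t : ℝ) :
    bh n (s • x + t • y) (s • x + t • y)
      = s^2 * bh n x x + 2*s*t * bh n x y + t^2 * bh n y y := by
  rw [bh_right_linear,
    show bh n (s • x + t • y) x = bh n x (s • x + t • y) from bh_comm _ _,
    show bh n (s • x + t • y) y = bh n y (s • x + t • y) from bh_comm _ _,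
    bh_right_linear, bh_right_linear,
    show bh n y x = bh n x y from bh_comm _ _]
  ring

set_option maxHeartbeats 1000000 in
lemma support_bound (n : ℕ) {ι : Type*} (S : Finset ι)
    (c : ι → (Fin (n+2) → ℝ)) (a : ι → ℤ)
    (hc : ∀ i ∈ S, intVec n (c i) ∧ c i ∈ closure {x : Fin (n+2) → ℝ | 0 < bh n x x ∧ 0 < x 0 + x 1})
    (hrel : ∑ i ∈ S, (a i : ℝ) • c i = 0) :
    ∃ δ : ℝ, 0 < δ ∧ ∀ lam : Fin (n+2) → ℝ, dualVec n lam →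
      (∑ i ∈ S, (a i : ℝ) * |bh n lam (c i)|) ≠ 0 →
      δ * (∑ k, |lam k|) ≤ -(bh n lam lam) := by
  classical
  obtain ⟨M, hM1, hMb⟩ : ∃ M : ℝ, 1 ≤ M ∧ ∀ i ∈ S, uu n (c i) ≤ M := by
    refine ⟨1 + ∑ i ∈ S, |uu n (c i)|, ?_, ?_⟩
    · have : 0 ≤ ∑ i ∈ S, |uu n (c i)| := Finset.sum_nonneg fun i _ => abs_nonneg _
      linarith
    · intro i hi
      have h1 : |uu n (c i)| ≤ ∑ j ∈ S, |uu n (c j)| :=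
        Finset.single_le_sum (f := fun j => |uu n (c j)|) (fun j _ => abs_nonneg _) hi
      have h2 := le_abs_self (uu n (c i))
      linarith
  obtain ⟨C2, hC21, hC2b⟩ : ∃ C2 : ℝ, 1 ≤ C2 ∧ ∀ i ∈ S, 2 * ∑ k, |c i k| ≤ C2 := by
    refine ⟨1 + ∑ i ∈ S, (2 * ∑ k, |c i k|), ?_, ?_⟩
    · have : 0 ≤ ∑ i ∈ S, (2 * ∑ k, |c i k|) := Finset.sum_nonneg fun i _ => by positivity
      linarith
    · intro i hi
      have h1 : 2 * ∑ k, |c i k| ≤ ∑ j ∈ S, (2 * ∑ k, |c j k|) :=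
        Finset.single_le_sum (f := fun j => 2 * ∑ k, |c j k|) (fun j _ => by positivity) hi
      linarith
  obtain ⟨κ, hκpos, hκb⟩ : ∃ κ : ℝ, 0 < κ ∧
      ∀ i ∈ S, ∀ j ∈ S, 0 < bh n (c i) (c j) → κ ≤ bh n (c i) (c j) := by
    set P : Finset (ι × ι) := (S ×ˢ S).filter (fun p => 0 < bh n (c p.1) (c p.2)) with hP
    by_cases h : P.Nonempty
    · refine ⟨P.inf' h (fun p => bh n (c p.1) (c p.2)), ?_, ?_⟩
      · exact (Finset.lt_inf'_iff h).2 fun p hp => (Finset.mem_filter.1 hp).2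
      · intro i hi j hj hpos
        have hm : (i,j) ∈ P :=
          Finset.mem_filter.2 ⟨Finset.mem_product.2 ⟨hi, hj⟩, hpos⟩
        exact Finset.inf'_le _ hm
    · refine ⟨1, one_pos, fun i hi j hj hpos => absurd ⟨(i,j), ?_⟩ h⟩
      exact Finset.mem_filter.2 ⟨Finset.mem_product.2 ⟨hi, hj⟩, hpos⟩
  have hMsq : (0:ℝ) < M^2 := by nlinarith [hM1]
  have hden : (0:ℝ) < 2 * ((n:ℝ)+2) * M^2 * C2 := by
    have h1 : (0:ℝ) < 2*((n:ℝ)+2) := by positivity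
    exact mul_pos (mul_pos h1 hMsq) (lt_of_lt_of_le one_pos hC21)
  refine ⟨κ / (2 * ((n:ℝ)+2) * M^2 * C2), div_pos hκpos hden, ?_⟩
  intro lam hdual hp
  have hex_j : ∃ j ∈ S, bh n lam (c j) < 0 := by
    by_contra hcon
    push_neg at hcon
    apply hp
    have heq : ∀ i ∈ S, (a i : ℝ) * |bh n lam (c i)| = (a i : ℝ) * bh n lam (c i) :=
      fun i hi => by rw [abs_of_nonneg (hcon i hi)]
    rw [Finset.sum_congr rfl heq, ← bh_sum_right S lam _ c, hrel, bh_zero_right]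
  have hex_i : ∃ i ∈ S, 0 < bh n lam (c i) := by
    by_contra hcon
    push_neg at hcon
    apply hp
    have heq : ∀ i ∈ S, (a i : ℝ) * |bh n lam (c i)| = -((a i : ℝ) * bh n lam (c i)) :=
      fun i hi => by rw [abs_of_nonpos (hcon i hi)]; ring
    rw [Finset.sum_congr rfl heq, Finset.sum_neg_distrib,
      ← bh_sum_right S lam _ c, hrel, bh_zero_right, neg_zero]
  obtain ⟨i, hiS, hi⟩ := hex_i
  obtain ⟨j, hjS, hj⟩ := hex_j
  have hconei := cone_facts (n := n) (hc i hiS).2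
  have hconej := cone_facts (n := n) (hc j hjS).2
  obtain ⟨A, hA⟩ : ∃ A : ℝ, A = bh n lam (c i) := ⟨_, rfl⟩
  obtain ⟨B, hB⟩ : ∃ B : ℝ, B = -(bh n lam (c j)) := ⟨_, rfl⟩
  have hApos : 0 < A := by rw [hA]; exact hi
  have hBpos : 0 < B := by rw [hB]; linarith
  have hBb : bh n lam (c j) = -B := by rw [hB]; ring
  have hA1 : 1 ≤ A := by
    obtain ⟨m, hm⟩ := hdual (c i) (hc i hiS).1
    have hm0 : 0 < m := by
      have : (0:ℝ) < (m:ℝ) := by rw [← hm]; exact hi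
      exact_mod_cast this
    have h1 : (1:ℤ) ≤ m := hm0
    rw [hA, hm]; exact_mod_cast h1
  have hB1 : 1 ≤ B := by
    obtain ⟨m, hm⟩ := hdual (c j) (hc j hjS).1
    have hm0 : m < 0 := by
      have : (m:ℝ) < 0 := by rw [← hm]; exact hj
      exact_mod_cast this
    have h1 : m ≤ -1 := by omega
    have h2 : (m:ℝ) ≤ -1 := by exact_mod_cast h1
    rw [hB, hm]; linarith
  have hbij : 0 < bh n (c i) (c j) := bh_pos_of_sep hconei hconej hi hj
  have hκle : κ ≤ bh n (c i) (c j) := hκb i hiS j hjS hbij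
  obtain ⟨v, hv⟩ : ∃ v : Fin (n+2) → ℝ, v = A • (c j) + B • (c i) := ⟨_, rfl⟩
  have hbhlamv : bh n lam v = 0 := by
    rw [hv, bh_right_linear, hBb, ← hA]; ring
  have huuv : uu n v = A * uu n (c j) + B * uu n (c i) := by rw [hv, uu_linear]
  have huvM : uu n v ≤ (A+B) * M := by
    have h1 : uu n (c j) ≤ M := hMb j hjS
    have h2 : uu n (c i) ≤ M := hMb i hiS
    rw [huuv]; nlinarith [hApos, hBpos]
  have hbhvv : 2*A*B*κ ≤ bh n v v := by
    have hexp := bh_expand (n:=n) (c j) (c i) A B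
    rw [← hv] at hexp
    have hcc : bh n (c j) (c i) = bh n (c i) (c j) := bh_comm _ _
    rw [hcc] at hexp
    nlinarith [hexp, mul_nonneg (sq_nonneg A) hconej.1,
      mul_nonneg (sq_nonneg B) hconei.1,
      mul_le_mul_of_nonneg_left hκle (mul_pos hApos hBpos).le]
  have hbhvvpos : 0 < bh n v v := by
    nlinarith [hbhvv, mul_pos (mul_pos hApos hBpos) hκpos]
  have huvpos : 0 < uu n v := by
    have h0 : 0 ≤ uu n v := by
      rw [huuv]
      nlinarith [mul_nonneg hApos.le hconej.2, mul_nonneg hBpos.le hconei.2]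
    rcases lt_or_eq_of_le h0 with h | h
    · exact h
    · exfalso
      have hb := bh_eq (n:=n) v v
      rw [← h] at hb
      have hd := dd_self_nonneg (n:=n) v
      nlinarith [hbhvvpos]
  have hdlv : dd n lam v = uu n lam * uu n v / 2 := by
    rw [bh_eq] at hbhlamv; linarith
  have hdvv : dd n v v = uu n v^2/2 - bh n v v := by
    have hb := bh_eq (n:=n) v v
    nlinarith [hb]
  have key1 : dd n lam lam * bh n v v ≤ (-(bh n lam lam)) * (uu n v^2/2) := by
    have hcs := dd_sq_le (n:=n) lam v
    rw [hdlv, hdvv] at hcs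
    have hb := bh_eq (n:=n) lam lam
    nlinarith [hcs, hb]
  have hself2 : uu n lam^2 ≤ 2 * dd n lam lam := by
    have hcs2 := dd_sq_le (n:=n) lam v
    rw [hdlv] at hcs2
    have hddvv_le : dd n v v ≤ uu n v^2/2 := by rw [hdvv]; linarith [hbhvvpos]
    have h4 : (uu n lam)^2 * (uu n v)^2 ≤ (2 * dd n lam lam) * (uu n v)^2 := by
      nlinarith [hcs2, hddvv_le, dd_self_nonneg (n:=n) lam]
    exact le_of_mul_le_mul_right h4 (pow_pos huvpos 2)
  obtain ⟨T, hT⟩ : ∃ T : ℝ, T = ∑ k, |lam k| := ⟨_, rfl⟩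
  have hTnn : 0 ≤ T := by
    rw [hT]; exact Finset.sum_nonneg fun k _ => abs_nonneg _
  have hT2 : T^2 ≤ ((n:ℝ)+2) * (2 * dd n lam lam) := by
    have cheb : (∑ k, |lam k|)^2 ≤ ((Finset.univ : Finset (Fin (n+2))).card : ℝ)
        * ∑ k, |lam k|^2 :=
      sq_sum_le_card_mul_sum_sq (s := (Finset.univ : Finset (Fin (n+2))))
        (f := fun k => |lam k|)
    rw [Finset.card_univ, Fintype.card_fin] at cheb
    have hcast : (((n+2 : ℕ)) : ℝ) = (n:ℝ) + 2 := by push_cast; ring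
    rw [hcast] at cheb
    have habs2 : ∑ k, |lam k|^2 = ∑ k, lam k^2 :=
      Finset.sum_congr rfl fun k _ => sq_abs _
    rw [habs2] at cheb
    have hsum_le : ∑ k, lam k^2 ≤ uu n lam^2/2 + dd n lam lam := by
      rw [sum_split (fun k => lam k^2)]
      simp only [uu, dd]
      have hs : ∑ k ∈ Finset.Ioi (1 : Fin (n+2)), lam k^2
          = ∑ k ∈ Finset.Ioi (1 : Fin (n+2)), lam k * lam k :=
        Finset.sum_congr rfl fun k _ => pow_two (lam k)
      rw [hs]
      have hsnn : 0 ≤ ∑ k ∈ Finset.Ioi (1 : Fin (n+2)), lam k * lam k :=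
        Finset.sum_nonneg fun k _ => mul_self_nonneg _
      nlinarith [hsnn]
    have hmono : ((n:ℝ)+2) * (∑ k, lam k^2) ≤ ((n:ℝ)+2) * (2 * dd n lam lam) := by
      apply mul_le_mul_of_nonneg_left _ (by positivity)
      linarith [hself2]
    rw [hT]
    calc (∑ k, |lam k|)^2 ≤ ((n:ℝ)+2) * ∑ k, lam k^2 := cheb
      _ ≤ ((n:ℝ)+2) * (2 * dd n lam lam) := hmono
  have hABle : A + B ≤ 2 * C2 * T := by
    have h1 : A ≤ C2 * T := by
      have hb := abs_bh_le (n:=n) lam (c i)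
      have h2 := hC2b i hiS
      have h3 : 0 ≤ 2 * ∑ k, |c i k| := by positivity
      calc A ≤ |bh n lam (c i)| := by rw [hA]; exact le_abs_self _
        _ ≤ (2 * ∑ k, |c i k|) * T := by rw [hT]; exact hb
        _ ≤ C2 * T := mul_le_mul_of_nonneg_right h2 hTnn
    have h1' : B ≤ C2 * T := by
      have hb := abs_bh_le (n:=n) lam (c j)
      have h2 := hC2b j hjS
      calc B ≤ |bh n lam (c j)| := by rw [hB]; exact neg_le_abs _
        _ ≤ (2 * ∑ k, |c j k|) * T := by rw [hT]; exact hb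
        _ ≤ C2 * T := mul_le_mul_of_nonneg_right h2 hTnn
    linarith
  have hTpos : 0 < T := by
    rcases lt_or_eq_of_le hTnn with h | h
    · exact h
    · exfalso
      have hz : 2 * C2 * T = 0 := by rw [← h]; ring
      linarith [hABle, hA1, hB1]
  have hddllpos : 0 < dd n lam lam := by
    nlinarith [hT2, pow_pos hTpos 2, Nat.cast_nonneg (α := ℝ) n]
  have hQm : 0 < -(bh n lam lam) := by
    nlinarith [key1, mul_pos hddllpos hbhvvpos, mul_pos huvpos huvpos]
  -- main chain
  have hstep1 : κ * T^2 * (A+B) ≤ (((n:ℝ)+2) * (2 * dd n lam lam)) * bh n v v := by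
    have f1 : (A+B) * κ ≤ bh n v v := by
      nlinarith [hbhvv, hκpos,
        mul_nonneg (mul_nonneg (sub_nonneg.2 hA1) (sub_nonneg.2 hB1)) hκpos.le,
        mul_le_mul hA1 hB1 zero_le_one (by linarith : (0:ℝ) ≤ A)]
    have f2 : T^2 ≤ ((n:ℝ)+2) * (2 * dd n lam lam) := hT2
    have f3 : 0 ≤ (A+B) * κ := mul_nonneg (by linarith) hκpos.le
    have f4 : 0 ≤ ((n:ℝ)+2) * (2 * dd n lam lam) :=
      mul_nonneg (by positivity) (by linarith)
    have f5 := mul_le_mul f2 f1 f3 f4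
    calc κ * T^2 * (A+B) = T^2 * ((A+B) * κ) := by ring
      _ ≤ (((n:ℝ)+2) * (2 * dd n lam lam)) * bh n v v := f5
  have hstep2 : (((n:ℝ)+2) * (2 * dd n lam lam)) * bh n v v
      ≤ (((n:ℝ)+2) * (-(bh n lam lam)) * (A+B) * M^2) * (A+B) := by
    have s2 : uu n v^2 ≤ (A+B)^2 * M^2 := by
      have := pow_le_pow_left₀ huvpos.le huvM 2
      calc uu n v^2 ≤ ((A+B)*M)^2 := this
        _ = (A+B)^2 * M^2 := by ring
    have s3 : (-(bh n lam lam)) * (uu n v^2) ≤ (-(bh n lam lam)) * ((A+B)^2 * M^2) :=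
      mul_le_mul_of_nonneg_left s2 hQm.le
    have k2 := mul_le_mul_of_nonneg_left key1 (show (0:ℝ) ≤ 2*((n:ℝ)+2) by positivity)
    have k3 := mul_le_mul_of_nonneg_left s3 (show (0:ℝ) ≤ ((n:ℝ)+2) by positivity)
    calc (((n:ℝ)+2) * (2 * dd n lam lam)) * bh n v v
        = 2*((n:ℝ)+2) * (dd n lam lam * bh n v v) := by ring
      _ ≤ 2*((n:ℝ)+2) * (-(bh n lam lam) * (uu n v^2/2)) := k2
      _ = ((n:ℝ)+2) * ((-(bh n lam lam)) * (uu n v^2)) := by ring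
      _ ≤ ((n:ℝ)+2) * ((-(bh n lam lam)) * ((A+B)^2 * M^2)) := k3
      _ = (((n:ℝ)+2) * (-(bh n lam lam)) * (A+B) * M^2) * (A+B) := by ring
  have hstep3 : κ * T^2 ≤ ((n:ℝ)+2) * (-(bh n lam lam)) * (A+B) * M^2 := by
    have hAB : 0 < A + B := by linarith
    have := le_trans hstep1 hstep2
    exact le_of_mul_le_mul_right this hAB
  have hstep4 : κ * T^2 ≤ (((n:ℝ)+2) * (-(bh n lam lam)) * M^2 * (2 * C2)) * T := by
    have h0 : 0 ≤ ((n:ℝ)+2) * (-(bh n lam lam)) * M^2 :=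
      mul_nonneg (mul_nonneg (by positivity) hQm.le) (sq_nonneg M)
    have h5 := mul_le_mul_of_nonneg_left hABle h0
    calc κ * T^2 ≤ ((n:ℝ)+2) * (-(bh n lam lam)) * (A+B) * M^2 := hstep3
      _ = ((n:ℝ)+2) * (-(bh n lam lam)) * M^2 * (A+B) := by ring
      _ ≤ ((n:ℝ)+2) * (-(bh n lam lam)) * M^2 * (2 * C2 * T) := h5
      _ = (((n:ℝ)+2) * (-(bh n lam lam)) * M^2 * (2 * C2)) * T := by ring
  have hstep5 : κ * T ≤ ((n:ℝ)+2) * (-(bh n lam lam)) * M^2 * (2 * C2) := by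
    have h4' : (κ * T) * T ≤ (((n:ℝ)+2) * (-(bh n lam lam)) * M^2 * (2 * C2)) * T := by
      calc (κ * T) * T = κ * T^2 := by ring
        _ ≤ _ := hstep4
    exact le_of_mul_le_mul_right h4' hTpos
  rw [div_mul_eq_mul_div, div_le_iff₀ hden]
  rw [hT] at hstep5
  calc κ * (∑ k, |lam k|) ≤ ((n:ℝ)+2) * (-(bh n lam lam)) * M^2 * (2 * C2) := hstep5
    _ = -(bh n lam lam) * (2 * ((n:ℝ)+2) * M^2 * C2) := by ring

def evec (n : ℕ) (k : Fin (n+2)) : Fin (n+2) → ℝ := fun l => if l = k then 1 else 0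

lemma evec_int (k : Fin (n+2)) : intVec n (evec n k) := by
  intro l; unfold evec
  by_cases h : l = k
  · exact ⟨1, by simp [h]⟩
  · exact ⟨0, by simp [h]⟩

lemma bh_evec0 (x : Fin (n+2) → ℝ) : bh n x (evec n 0) = x 1 := by
  unfold bh evec
  rw [if_neg (fun h => zero_ne_one' (n := n) h.symm), if_pos rfl]
  rw [Finset.sum_eq_zero (fun i hi => by
    rw [if_neg, mul_zero]
    intro h; subst h; exact not_lt_zero' (Finset.mem_Ioi.1 hi))]
  ring

lemma bh_evec1 (x : Fin (n+2) → ℝ) : bh n x (evec n 1) = x 0 := by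
  unfold bh evec
  rw [if_pos rfl, if_neg (zero_ne_one' (n := n))]
  rw [Finset.sum_eq_zero (fun i hi => by
    rw [if_neg, mul_zero]
    intro h; subst h; exact lt_irrefl _ (Finset.mem_Ioi.1 hi))]
  ring

lemma bh_evecK (x : Fin (n+2) → ℝ) (k : Fin (n+2)) (hk : (1 : Fin (n+2)) < k) :
    bh n x (evec n k) = -(2 * x k) := by
  unfold bh evec
  rw [if_neg (ne_of_lt hk), if_neg (fun h => not_lt_zero' (n := n) (by rw [← h] at hk; exact hk))]
  have hs : ∑ i ∈ Finset.Ioi (1 : Fin (n+2)), x i * (if i = k then (1:ℝ) else 0)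
      = x k := by
    rw [Finset.sum_congr rfl (fun i _ => mul_ite (i = k) (x i) (1:ℝ) 0)]
    simp only [mul_one, mul_zero]
    rw [Finset.sum_ite_eq' (Finset.Ioi (1 : Fin (n+2))) k x, if_pos (Finset.mem_Ioi.2 hk)]
  rw [hs]; ring

noncomputable def phi (n : ℕ) (l : {x : Fin (n+2) → ℝ // dualVec n x}) : Fin (n+2) → ℤ :=
  fun k => Classical.choose (l.2 (evec n k) (evec_int k))

lemma phi_spec (l : {x : Fin (n+2) → ℝ // dualVec n x}) (k : Fin (n+2)) :
    bh n l.1 (evec n k) = ((phi n l k : ℤ) : ℝ) :=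
  Classical.choose_spec (l.2 (evec n k) (evec_int k))

lemma phi_c0 (l : {x : Fin (n+2) → ℝ // dualVec n x}) :
    ((phi n l 0 : ℤ) : ℝ) = l.1 1 := (phi_spec l 0).symm.trans (bh_evec0 l.1)

lemma phi_c1 (l : {x : Fin (n+2) → ℝ // dualVec n x}) :
    ((phi n l 1 : ℤ) : ℝ) = l.1 0 := (phi_spec l 1).symm.trans (bh_evec1 l.1)

lemma phi_ck (l : {x : Fin (n+2) → ℝ // dualVec n x}) (k : Fin (n+2))
    (hk : (1 : Fin (n+2)) < k) :
    ((phi n l k : ℤ) : ℝ) = -(2 * l.1 k) :=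
  (phi_spec l k).symm.trans (bh_evecK l.1 k hk)

lemma phi_inj : Function.Injective (phi n) := by
  intro l1 l2 h
  apply Subtype.ext; funext k
  rcases fin_cases' k with hk | hk | hk
  · subst hk
    have e1 := phi_c1 l1
    have e2 := phi_c1 l2
    rw [← e1, ← e2]
    exact_mod_cast congrFun h 1
  · subst hk
    have e1 := phi_c0 l1
    have e2 := phi_c0 l2
    rw [← e1, ← e2]
    exact_mod_cast congrFun h 0
  · have hck : ((phi n l1 k : ℤ) : ℝ) = ((phi n l2 k : ℤ) : ℝ) := by
      exact_mod_cast congrFun h k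
    rw [phi_ck l1 k hk, phi_ck l2 k hk] at hck
    linarith

lemma phi_sum_lower (l : {x : Fin (n+2) → ℝ // dualVec n x}) :
    (∑ k, |l.1 k|) ≤ ∑ k, |((phi n l k : ℤ) : ℝ)| := by
  rw [sum_split (fun k => |l.1 k|), sum_split (fun k => |((phi n l k : ℤ) : ℝ)|)]
  rw [phi_c0, phi_c1]
  have hIoi : ∑ k ∈ Finset.Ioi (1 : Fin (n+2)), |((phi n l k : ℤ) : ℝ)|
      = ∑ k ∈ Finset.Ioi (1 : Fin (n+2)), 2 * |l.1 k| := by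
    refine Finset.sum_congr rfl fun k hk => ?_
    rw [phi_ck l k (Finset.mem_Ioi.1 hk), abs_neg, abs_mul]
    norm_num
  rw [hIoi]
  have h1 : ∑ k ∈ Finset.Ioi (1 : Fin (n+2)), |l.1 k|
      ≤ ∑ k ∈ Finset.Ioi (1 : Fin (n+2)), 2 * |l.1 k| :=
    Finset.sum_le_sum fun k _ => by linarith [abs_nonneg (l.1 k)]
  linarith

lemma phi_sum_upper (l : {x : Fin (n+2) → ℝ // dualVec n x}) :
    (∑ k, |((phi n l k : ℤ) : ℝ)|) ≤ 2 * ∑ k, |l.1 k| := by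
  rw [sum_split (fun k => |l.1 k|), sum_split (fun k => |((phi n l k : ℤ) : ℝ)|)]
  rw [phi_c0, phi_c1]
  have hIoi : ∑ k ∈ Finset.Ioi (1 : Fin (n+2)), |((phi n l k : ℤ) : ℝ)|
      = ∑ k ∈ Finset.Ioi (1 : Fin (n+2)), 2 * |l.1 k| := by
    refine Finset.sum_congr rfl fun k hk => ?_
    rw [phi_ck l k (Finset.mem_Ioi.1 hk), abs_neg, abs_mul]
    norm_num
  rw [hIoi]
  have hmul : ∑ k ∈ Finset.Ioi (1 : Fin (n+2)), 2 * |l.1 k|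
      = 2 * ∑ k ∈ Finset.Ioi (1 : Fin (n+2)), |l.1 k| := by rw [Finset.mul_sum]
  rw [hmul]
  linarith [abs_nonneg (l.1 0), abs_nonneg (l.1 1)]

lemma sum_le_prod_one_add {β : Type*} (s : Finset β) (f : β → ℝ) (hf : ∀ b, 0 ≤ f b) :
    ∑ b ∈ s, f b ≤ ∏ b ∈ s, (1 + f b) := by
  induction s using Finset.cons_induction with
  | empty => simp
  | cons a s ha ih =>
      rw [Finset.sum_cons, Finset.prod_cons]
      have h1 : (1:ℝ) ≤ ∏ b ∈ s, (1 + f b) := by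
        have := Finset.prod_le_prod (s := s) (f := fun _ : β => (1:ℝ)) (g := fun b => 1 + f b)
          (fun i _ => zero_le_one) (fun i _ => by show (1:ℝ) ≤ 1 + f i; linarith [hf i])
        rwa [Finset.prod_const_one] at this
      nlinarith [hf a, ih, mul_le_mul_of_nonneg_left h1 (hf a)]

lemma summable_h (c : ℝ) (hc : 0 < c) :
    Summable (fun t : ℤ => (1 + |(t : ℝ)|) * Real.exp (-c * |(t : ℝ)|)) := by
  have hr : Real.exp (-c) < 1 := Real.exp_lt_one_iff.2 (by linarith)
  have hr0 : 0 < Real.exp (-c) := Real.exp_pos _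
  have hnat : Summable (fun m : ℕ => (1 + (m : ℝ)) * Real.exp (-c) ^ m) := by
    have h1 : Summable (fun m : ℕ => Real.exp (-c) ^ m) :=
      summable_geometric_of_lt_one hr0.le hr
    have h2 : Summable (fun m : ℕ => (m : ℝ) ^ 1 * Real.exp (-c) ^ m) :=
      summable_pow_mul_geometric_of_norm_lt_one 1 (by rw [Real.norm_eq_abs, abs_of_pos hr0]; exact hr)
    have := h1.add h2
    apply this.congr
    intro m; simp [pow_one]; ring
  apply Summable.of_nat_of_neg
  · apply hnat.congr
    intro m
    have h1 : |(((m : ℕ) : ℤ) : ℝ)| = (m : ℝ) := by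
      push_cast
      exact abs_of_nonneg (Nat.cast_nonneg m)
    rw [h1, show -c * (m:ℝ) = (m:ℝ) * (-c) by ring, Real.exp_nat_mul]
  · apply hnat.congr
    intro m
    have h1 : ((-((m:ℕ) : ℤ) : ℤ) : ℝ) = -((m:ℕ):ℝ) := by push_cast; ring
    rw [h1, abs_neg, abs_of_nonneg (Nat.cast_nonneg m),
      show -c * (m:ℝ) = (m:ℝ) * (-c) by ring, Real.exp_nat_mul]

lemma summable_pi_prod (d : ℕ) (h : ℤ → ℝ) (h0 : ∀ t, 0 ≤ h t) (hs : Summable h) :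
    Summable (fun m : Fin d → ℤ => ∏ k, h (m k)) := by
  induction d with
  | zero =>
      exact (hasSum_single (f := fun m : Fin 0 → ℤ => ∏ k : Fin 0, h (m k))
        (default : Fin 0 → ℤ)
        (fun b hb => absurd (Subsingleton.elim b default) hb)).summable
  | succ d ih =>
      have hprod : Summable (fun p : ℤ × (Fin d → ℤ) => h p.1 * ∏ k, h (p.2 k)) :=
        Summable.mul_of_nonneg (f := h) (g := fun m : Fin d → ℤ => ∏ k, h (m k)) hs ih
          (fun t => h0 t) (fun m => Finset.prod_nonneg fun k _ => h0 _)
      have := hprod.comp_injective (Fin.consEquiv (fun _ : Fin (d+1) => ℤ)).symm.injective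
      apply this.congr
      intro m
      rw [Function.comp_apply]
      rw [Fin.prod_univ_succ]
      rfl

lemma master (n : ℕ) {ι : Type*} (S : Finset ι) (c : ι → (Fin (n+2) → ℝ)) (a : ι → ℤ)
    (δ : ℝ) (hδ : 0 < δ)
    (hsupp : ∀ lam : Fin (n+2) → ℝ, dualVec n lam →
      (∑ i ∈ S, (a i : ℝ) * |bh n lam (c i)|) ≠ 0 →
      δ * (∑ k, |lam k|) ≤ -(bh n lam lam))
    (y : ℝ) (hy : 0 < y) :
    Summable (fun l : {x : Fin (n+2) → ℝ // dualVec n x} =>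
      abs (∑ i ∈ S, (a i : ℝ) * |bh n l.1 (c i)|) * Real.exp (2 * π * y * qh n l.1)) := by
  classical
  obtain ⟨Cp, hCp1, hCpb⟩ : ∃ Cp : ℝ, 1 ≤ Cp ∧ ∀ lam : Fin (n+2) → ℝ,
      abs (∑ i ∈ S, (a i : ℝ) * |bh n lam (c i)|) ≤ Cp * ∑ k, |lam k| := by
    refine ⟨1 + ∑ i ∈ S, |(a i : ℝ)| * (2 * ∑ k, |c i k|), ?_, ?_⟩
    · have : 0 ≤ ∑ i ∈ S, |(a i : ℝ)| * (2 * ∑ k, |c i k|) :=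
        Finset.sum_nonneg fun i _ => by positivity
      linarith
    · intro lam
      have hTnn : 0 ≤ ∑ k, |lam k| := Finset.sum_nonneg fun k _ => abs_nonneg _
      calc abs (∑ i ∈ S, (a i : ℝ) * |bh n lam (c i)|)
          ≤ ∑ i ∈ S, abs ((a i : ℝ) * |bh n lam (c i)|) := Finset.abs_sum_le_sum_abs _ _
        _ = ∑ i ∈ S, |(a i : ℝ)| * |bh n lam (c i)| := by
            refine Finset.sum_congr rfl fun i _ => ?_
            rw [abs_mul, abs_abs]
        _ ≤ ∑ i ∈ S, |(a i : ℝ)| * ((2 * ∑ k, |c i k|) * ∑ k, |lam k|) :=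
            Finset.sum_le_sum fun i _ =>
              mul_le_mul_of_nonneg_left (abs_bh_le lam (c i)) (abs_nonneg _)
        _ = (∑ i ∈ S, |(a i : ℝ)| * (2 * ∑ k, |c i k|)) * ∑ k, |lam k| := by
            rw [Finset.sum_mul]
            exact Finset.sum_congr rfl fun i _ => by ring
        _ ≤ (1 + ∑ i ∈ S, |(a i : ℝ)| * (2 * ∑ k, |c i k|)) * ∑ k, |lam k| := by
            apply mul_le_mul_of_nonneg_right _ hTnn
            linarith
  obtain ⟨c0, hc0, hc0pos⟩ : ∃ c0 : ℝ, c0 = π * y * δ / 2 ∧ 0 < c0 :=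
    ⟨_, rfl, by positivity⟩
  have hg : Summable (fun m : Fin (n+2) → ℤ =>
      Cp * ∏ k, ((1 + |((m k : ℤ) : ℝ)|) * Real.exp (-c0 * |((m k : ℤ) : ℝ)|))) := by
    refine Summable.mul_left Cp ?_
    exact summable_pi_prod (n+2) (fun t => (1 + |(t : ℝ)|) * Real.exp (-c0 * |(t : ℝ)|))
      (fun t => by positivity) (summable_h c0 hc0pos)
  have hcomp := hg.comp_injective (phi_inj (n := n))
  apply Summable.of_nonneg_of_le _ _ hcomp
  · intro l; positivity
  · intro l
    rw [Function.comp_apply]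
    obtain ⟨T, hT⟩ : ∃ T : ℝ, T = ∑ k, |l.1 k| := ⟨_, rfl⟩
    obtain ⟨Tm, hTm⟩ : ∃ Tm : ℝ, Tm = ∑ k, |((phi n l k : ℤ) : ℝ)| := ⟨_, rfl⟩
    have hTnn : 0 ≤ T := hT ▸ Finset.sum_nonneg fun k _ => abs_nonneg _
    have hTmnn : 0 ≤ Tm := hTm ▸ Finset.sum_nonneg fun k _ => abs_nonneg _
    have hTTm : T ≤ Tm := by rw [hT, hTm]; exact phi_sum_lower l
    have hTm2 : Tm ≤ 2 * T := by rw [hT, hTm]; exact phi_sum_upper l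
    by_cases hp0 : (∑ i ∈ S, (a i : ℝ) * |bh n l.1 (c i)|) = 0
    · rw [hp0, abs_zero, zero_mul]
      positivity
    · have hsup := hsupp l.1 l.2 hp0
      rw [← hT] at hsup
      have hqh : qh n l.1 ≤ -(δ * T) / 2 := by
        unfold qh; linarith
      have harg : 2 * π * y * qh n l.1 ≤ -c0 * Tm := by
        have h1 : 2 * π * y * qh n l.1 ≤ 2 * π * y * (-(δ * T) / 2) :=
          mul_le_mul_of_nonneg_left hqh (by positivity)
        have h2 := mul_le_mul_of_nonneg_left hTm2 (show 0 ≤ π * y * δ / 2 by positivity)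
        rw [hc0]
        nlinarith [h1, h2]
      have hCpT : abs (∑ i ∈ S, (a i : ℝ) * |bh n l.1 (c i)|) ≤ Cp * T := by
        rw [hT]; exact hCpb l.1
      have hprodTm : Tm ≤ ∏ k, (1 + |((phi n l k : ℤ) : ℝ)|) := by
        rw [hTm]
        exact sum_le_prod_one_add Finset.univ (fun k => |((phi n l k : ℤ) : ℝ)|)
          (fun k => abs_nonneg _)
      have hexp_eq : Real.exp (-c0 * Tm)
          = ∏ k, Real.exp (-c0 * |((phi n l k : ℤ) : ℝ)|) := by
        rw [hTm, Finset.mul_sum, Real.exp_sum]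
      have hCp0 : (0:ℝ) ≤ Cp := by linarith
      calc abs (∑ i ∈ S, (a i : ℝ) * |bh n l.1 (c i)|) * Real.exp (2 * π * y * qh n l.1)
          ≤ (Cp * T) * Real.exp (2 * π * y * qh n l.1) :=
            mul_le_mul_of_nonneg_right hCpT (Real.exp_pos _).le
        _ ≤ (Cp * Tm) * Real.exp (2 * π * y * qh n l.1) :=
            mul_le_mul_of_nonneg_right
              (mul_le_mul_of_nonneg_left hTTm hCp0) (Real.exp_pos _).le
        _ ≤ (Cp * Tm) * Real.exp (-c0 * Tm) :=
            mul_le_mul_of_nonneg_left (Real.exp_le_exp.2 harg)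
              (mul_nonneg hCp0 hTmnn)
        _ ≤ (Cp * ∏ k, (1 + |((phi n l k : ℤ) : ℝ)|)) * Real.exp (-c0 * Tm) :=
            mul_le_mul_of_nonneg_right
              (mul_le_mul_of_nonneg_left hprodTm hCp0) (Real.exp_pos _).le
        _ = Cp * ∏ k, ((1 + |((phi n l k : ℤ) : ℝ)|) * Real.exp (-c0 * |((phi n l k : ℤ) : ℝ)|)) := by
            rw [hexp_eq, Finset.prod_mul_distrib, mul_assoc]

lemma norm_term (n : ℕ) (p : ℝ) (τ : ℂ) (x : Fin (n+2) → ℝ) :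
    ‖((p : ℝ) : ℂ) * Complex.exp (2 * (π : ℂ) * Complex.I * τ * ((-(qh n x) : ℝ) : ℂ))‖
      = |p| * Real.exp (2 * π * τ.im * qh n x) := by
  rw [norm_mul, Complex.norm_real, Real.norm_eq_abs, Complex.norm_exp]
  congr 1
  have h : (2 * (π : ℂ) * Complex.I * τ * ((-(qh n x) : ℝ) : ℂ)).re
      = 2 * π * τ.im * qh n x := by
    simp [Complex.mul_re, Complex.mul_im, Complex.I_re, Complex.I_im,
      Complex.ofReal_re, Complex.ofReal_im]
  rw [h]

end ThetaAux

open ThetaAux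

/-- The series `Θ⁺(τ) = Σ_{λ∈K^∨} p⁺(λ) e^{−2πiτ Q(λ)}`, with
`p⁺(λ) = Σ aᵢ|λ·cᵢ|`, converges absolutely for every `τ` in the upper half-plane, and
defines a holomorphic function there. -/
theorem theta_plus_converges_holomorphic (n : ℕ) {ι : Type*} (S : Finset ι)
    (c : ι → (Fin (n+2) → ℝ)) (a : ι → ℤ)
    (hc : ∀ i ∈ S, intVec n (c i) ∧ c i ∈ closure {x | 0 < bh n x x ∧ 0 < x 0 + x 1})
    (ha : ∀ i ∈ S, a i ≠ 0)
    (hrel : ∑ i ∈ S, (a i : ℝ) • c i = 0) :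
    (∀ τ : ℂ, 0 < τ.im →
      Summable (fun lam : {x : Fin (n+2) → ℝ // dualVec n x} =>
        ‖((∑ i ∈ S, (a i : ℝ) * |bh n lam.1 (c i)| : ℝ) : ℂ) *
          Complex.exp (2 * (π : ℂ) * Complex.I * τ * ((-(qh n lam.1) : ℝ) : ℂ))‖)) ∧
    DifferentiableOn ℂ
      (fun τ : ℂ => ∑' lam : {x : Fin (n+2) → ℝ // dualVec n x},
        ((∑ i ∈ S, (a i : ℝ) * |bh n lam.1 (c i)| : ℝ) : ℂ) *
          Complex.exp (2 * (π : ℂ) * Complex.I * τ * ((-(qh n lam.1) : ℝ) : ℂ)))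
      {τ : ℂ | 0 < τ.im} := by
  obtain ⟨δ, hδ, hsupp⟩ := support_bound n S c a hc hrel
  have hnorm : ∀ (τ : ℂ) (l : {x : Fin (n+2) → ℝ // dualVec n x}),
      ‖((∑ i ∈ S, (a i : ℝ) * |bh n l.1 (c i)| : ℝ) : ℂ) *
        Complex.exp (2 * (π : ℂ) * Complex.I * τ * ((-(qh n l.1) : ℝ) : ℂ))‖
        = abs (∑ i ∈ S, (a i : ℝ) * |bh n l.1 (c i)|) * Real.exp (2 * π * τ.im * qh n l.1) :=
    fun τ l => norm_term n _ τ l.1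
  have hqh_le : ∀ l : {x : Fin (n+2) → ℝ // dualVec n x},
      (∑ i ∈ S, (a i : ℝ) * |bh n l.1 (c i)|) ≠ 0 → qh n l.1 ≤ 0 := by
    intro l hp0
    have h1 := hsupp l.1 l.2 hp0
    have h2 : 0 ≤ ∑ k, |l.1 k| := Finset.sum_nonneg fun k _ => abs_nonneg _
    have h3 : 0 ≤ δ * ∑ k, |l.1 k| := mul_nonneg hδ.le h2
    unfold qh; linarith
  constructor
  · intro τ hτ
    have hm := master n S c a δ hδ hsupp τ.im hτ
    exact (summable_congr (fun l => hnorm τ l)).2 hm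
  · have main : ∀ b : ℝ, 0 < b → DifferentiableOn ℂ
        (fun τ : ℂ => ∑' lam : {x : Fin (n+2) → ℝ // dualVec n x},
          ((∑ i ∈ S, (a i : ℝ) * |bh n lam.1 (c i)| : ℝ) : ℂ) *
            Complex.exp (2 * (π : ℂ) * Complex.I * τ * ((-(qh n lam.1) : ℝ) : ℂ)))
        {τ : ℂ | b < τ.im} := by
      intro b hb
      have hu := master n S c a δ hδ hsupp b hb
      have hle : ∀ l : {x : Fin (n+2) → ℝ // dualVec n x}, ∀ τ ∈ {τ : ℂ | b < τ.im},
          ‖((∑ i ∈ S, (a i : ℝ) * |bh n l.1 (c i)| : ℝ) : ℂ) *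
            Complex.exp (2 * (π : ℂ) * Complex.I * τ * ((-(qh n l.1) : ℝ) : ℂ))‖
          ≤ abs (∑ i ∈ S, (a i : ℝ) * |bh n l.1 (c i)|) * Real.exp (2 * π * b * qh n l.1) := by
        intro l τ hτ
        rw [hnorm τ l]
        by_cases hp0 : (∑ i ∈ S, (a i : ℝ) * |bh n l.1 (c i)|) = 0
        · rw [hp0, abs_zero, zero_mul, zero_mul]
        · apply mul_le_mul_of_nonneg_left _ (abs_nonneg _)
          apply Real.exp_le_exp.2
          have hq := hqh_le l hp0
          have hτb : b < τ.im := hτ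
          nlinarith [Real.pi_pos, mul_nonneg (sub_nonneg.2 hτb.le) (neg_nonneg.2 hq)]
      have htu := tendstoUniformlyOn_tsum hu hle
      apply htu.tendstoLocallyUniformlyOn.differentiableOn ?_
        (isOpen_lt continuous_const Complex.continuous_im)
      refine Filter.Eventually.of_forall fun s => ?_
      apply Differentiable.differentiableOn
      apply Differentiable.fun_sum
      intro l hl
      apply Differentiable.mul (differentiable_const _)
      apply Differentiable.cexp
      exact ((differentiable_const (2 * (π : ℂ) * Complex.I)).mul differentiable_id).mul
        (differentiable_const _)
    intro τ hτ
    have hτ' : 0 < τ.im := hτ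
    have h2 := main (τ.im / 2) (by linarith)
    have hopen : IsOpen {z : ℂ | τ.im / 2 < z.im} :=
      isOpen_lt continuous_const Complex.continuous_im
    have hmem : τ ∈ {z : ℂ | τ.im / 2 < z.im} := by
      simp only [Set.mem_setOf_eq]; linarith
    exact (h2.differentiableAt (hopen.mem_nhds hmem)).differentiableWithinAt
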